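/- Let (γ_n)_{n≥1} be a real sequence and let ℕ_{≥1} = ⊔_{i≥1} X_i be a partition of the positive integers into sets X_i. Suppose: (i) for each i, the subseries over X_i satisfies the Cauchy criterion, i.e., for every ε > 0 there exists N such that for all N ≤ m_1 ≤ m_2, |Σ_{n ∈ [m_1, m_2] ∩ X_i} γ_n| < ε; and (ii) for each i there exists D_i ≥ 0 such that |Σ_{n ∈ [a, b] ∩ X_i} γ_n| ≤ D_i for every interval of integers [a, b], and Σ_{i=1}^∞ D_i < ∞. Then Σ_{n=1}^∞ γ_n converges. -/
import Mathlib


set_option maxHeartbeats 1000000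
open Filter Topology

/-- **Lemma 4.13.** If the positive integers are partitioned into sets `X_i` such that
each subseries of `Σ γ_n` along `X_i` satisfies the Cauchy criterion, and all block
sums along `X_i` are bounded by constants `D_i` with `Σ D_i < ∞`, then `Σ γ_n`
converges. -/
theorem converges_of_decomposition (γ : ℕ → ℝ) (X : ℕ → Set ℕ)
    (hpart : ∀ n : ℕ, 1 ≤ n → ∃! i : ℕ, n ∈ X i)
    (hcauchy : ∀ i : ℕ, ∀ ε : ℝ, 0 < ε → ∃ N : ℕ, ∀ m₁ m₂ : ℕ, N ≤ m₁ → m₁ ≤ m₂ →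
      |∑ n ∈ Finset.Icc m₁ m₂, Set.indicator (X i) γ n| < ε)
    (D : ℕ → ℝ) (hD0 : ∀ i, 0 ≤ D i)
    (hD : ∀ i : ℕ, ∀ a b : ℕ, |∑ n ∈ Finset.Icc a b, Set.indicator (X i) γ n| ≤ D i)
    (hDsum : Summable D) :
    ∃ S : ℝ, Tendsto (fun N => ∑ n ∈ Finset.Icc 1 N, γ n) atTop (𝓝 S) := by
  have hsum : ∀ n : ℕ, 1 ≤ n → Summable (fun i => Set.indicator (X i) γ n) := by
    intro n hn
    obtain ⟨i₀, hi₀, huniq⟩ := hpart n hn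
    apply summable_of_ne_finset_zero (s := {i₀})
    intro i hi
    simp only [Finset.mem_singleton] at hi
    rw [Set.indicator_apply_eq_zero]
    intro hmem
    exact absurd (huniq i hmem) hi
  have hγ : ∀ n : ℕ, 1 ≤ n → γ n = ∑' i, Set.indicator (X i) γ n := by
    intro n hn
    obtain ⟨i₀, hi₀, huniq⟩ := hpart n hn
    rw [tsum_eq_single i₀]
    · rw [Set.indicator_of_mem hi₀]
    · intro i hi
      rw [Set.indicator_apply_eq_zero]
      intro hmem
      exact absurd (huniq i hmem) hi
  have hdecomp : ∀ a b : ℕ, 1 ≤ a →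
      ∑ n ∈ Finset.Icc a b, γ n = ∑' i, ∑ n ∈ Finset.Icc a b, Set.indicator (X i) γ n := by
    intro a b ha
    rw [Summable.tsum_finsetSum (f := fun (n : ℕ) (i : ℕ) => Set.indicator (X i) γ n)
      (fun n hn => hsum n (le_trans ha (Finset.mem_Icc.mp hn).1))]
    exact Finset.sum_congr rfl fun n hn => hγ n (le_trans ha (Finset.mem_Icc.mp hn).1)
  have hfsum : ∀ a b : ℕ, Summable (fun i => |∑ n ∈ Finset.Icc a b, Set.indicator (X i) γ n|) :=
    fun a b => hDsum.of_nonneg_of_le (fun i => abs_nonneg _) (fun i => hD i a b)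
  have hCauchy : CauchySeq (fun N => ∑ n ∈ Finset.Icc 1 N, γ n) := by
    rw [Metric.cauchySeq_iff']
    intro ε hε
    obtain ⟨I, hI⟩ := ((tendsto_sum_nat_add D).eventually
      (gt_mem_nhds (show (0:ℝ) < ε/2 by positivity))).exists
    have hε' : (0:ℝ) < ε / (2 * (I + 1)) := by positivity
    choose Nf hNf using fun i => hcauchy i (ε / (2 * (I + 1))) hε'
    obtain ⟨N₀, hle⟩ : ∃ N₀ : ℕ, ∀ i ∈ Finset.range I, Nf i ≤ N₀ :=
      ⟨(Finset.range I).sup Nf, fun i hi => Finset.le_sup hi⟩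
    have key : ∀ m₂ : ℕ, N₀ + 1 ≤ m₂ →
        |∑ n ∈ Finset.Icc (N₀ + 1) m₂, γ n| < ε := by
      intro m₂ hm
      obtain ⟨f, hfeq⟩ : ∃ f : ℕ → ℝ,
          f = fun i => ∑ n ∈ Finset.Icc (N₀ + 1) m₂, Set.indicator (X i) γ n := ⟨_, rfl⟩
      rw [hdecomp (N₀ + 1) m₂ (Nat.le_add_left 1 N₀), ← hfeq]
      have hs : Summable fun i => |f i| := by rw [hfeq]; exact hfsum (N₀ + 1) m₂
      have h1 : |∑' i, f i| ≤ ∑' i, |f i| := by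
        have := norm_tsum_le_tsum_norm (f := f) (by simpa [Real.norm_eq_abs] using hs)
        simpa [Real.norm_eq_abs] using this
      have hsplit : (∑ i ∈ Finset.range I, |f i|) + ∑' i, |f (i + I)| = ∑' i, |f i| :=
        Summable.sum_add_tsum_nat_add I hs
      have hfront : ∑ i ∈ Finset.range I, |f i| ≤ I * (ε / (2 * (I + 1))) := by
        calc ∑ i ∈ Finset.range I, |f i|
            ≤ ∑ i ∈ Finset.range I, ε / (2 * (I + 1)) := by
              refine Finset.sum_le_sum fun i hi => le_of_lt ?_
              rw [hfeq]
              exact hNf i (N₀ + 1) m₂ (Nat.le_succ_of_le (hle i hi)) hm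
          _ = I * (ε / (2 * (I + 1))) := by
              rw [Finset.sum_const, Finset.card_range, nsmul_eq_mul]
      have hfront' : (I : ℝ) * (ε / (2 * (I + 1))) < ε / 2 := by
        rw [mul_div_assoc', div_lt_div_iff₀ (by positivity) (by norm_num)]
        nlinarith [Nat.cast_nonneg (α := ℝ) I]
      have hs' : Summable fun i => |f (i + I)| := (summable_nat_add_iff I).mpr hs
      have hD' : Summable fun i => D (i + I) := (summable_nat_add_iff I).mpr hDsum
      have htail : ∑' i, |f (i + I)| ≤ ∑' i, D (i + I) :=
        Summable.tsum_le_tsum (fun i => hfeq ▸ hD (i + I) (N₀ + 1) m₂) hs' hD'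
      linarith [hI]
    refine ⟨N₀, fun n hn => ?_⟩
    rw [Real.dist_eq]
    have hsub : (∑ k ∈ Finset.Icc 1 n, γ k) - ∑ k ∈ Finset.Icc 1 N₀, γ k
        = ∑ k ∈ Finset.Icc (N₀ + 1) n, γ k := by
      have e1 : Finset.Icc 1 n = Finset.Ioc 0 n := Finset.Icc_add_one_left_eq_Ioc 0 n
      have e2 : Finset.Icc 1 N₀ = Finset.Ioc 0 N₀ := Finset.Icc_add_one_left_eq_Ioc 0 N₀
      have e3 : Finset.Icc (N₀ + 1) n = Finset.Ioc N₀ n := Finset.Icc_add_one_left_eq_Ioc N₀ n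
      rw [e1, e2, e3, sub_eq_iff_eq_add, add_comm,
        Finset.sum_Ioc_consecutive γ (Nat.zero_le N₀) hn]
    rw [hsub]
    rcases Nat.lt_or_ge n (N₀ + 1) with h | h
    · have : Finset.Icc (N₀ + 1) n = ∅ := Finset.Icc_eq_empty (by omega)
      simp [this, hε]
    · exact key n h
  exact cauchySeq_tendsto_of_complete hCauchy
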